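/- Let m ≥ 1 and t ≥ 4 be integers with t² ≥ m, and let γ > 0. Let A* be a finite set of arms with |A*| ≤ m. For each a ∈ A* let (X_{a,s})_{s≥1} be an i.i.d. sequence in [0,1] with mean r_a, let n_a be any random variable taking values in {0,1,…,t−1}, and let r̂_a denote the empirical mean of the first n_a samples of arm a (with r̂_a := 0 if n_a = 0). Let w be a standard Gaussian N(0,1) random variable independent of all the reward sequences and counts, and set r̄_a := r̂_a + w·√(γ·ln(t)/(n_a + 1)). Then Pr( ∑_{a∈A*} r̄_a ≥ ∑_{a∈A*} r_a ) ≥ (1/2)·Φ(−√(4/γ)). -/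

import Mathlib

open MeasureTheory ProbabilityTheory Finset

/-- The standard normal cumulative distribution function `Φ`. -/
noncomputable def stdGaussianCdf (x : ℝ) : ℝ :=
  ((ProbabilityTheory.gaussianReal 0 1) (Set.Iic x)).toReal


set_option maxHeartbeats 1000000

section Aux
open Real


/-- Core inequality for Hoeffding's lemma: for `p ∈ [0,1]`,
`(1-p) + p * exp h ≤ exp (p*h + h^2/8)`. -/
lemma hoeffding_core (p : ℝ) (hp0 : 0 ≤ p) (hp1 : p ≤ 1) (h : ℝ) :
    (1 - p) + p * exp h ≤ exp (p * h + h ^ 2 / 8) := by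
  rcases eq_or_lt_of_le hp1 with rfl | hp1
  · have : exp h ≤ exp (h + h ^ 2 / 8) := Real.exp_le_exp.2 (by nlinarith [sq_nonneg h])
    simpa using this
  rcases eq_or_lt_of_le hp0 with rfl | hp0
  · simpa using Real.one_le_exp (by positivity)
  -- now 0 < p < 1
  set D : ℝ → ℝ := fun x => (1 - p) + p * exp x with hD
  have hDpos : ∀ x, 0 < D x := fun x => by
    have := exp_pos x; simp only [hD]; nlinarith
  set g : ℝ → ℝ := fun x => p * x + x ^ 2 / 8 - log (D x) with hg
  set g' : ℝ → ℝ := fun x => p + x / 4 - p * exp x / D x with hg'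
  have hDderiv : ∀ x, HasDerivAt D (p * exp x) x := fun x =>
    ((Real.hasDerivAt_exp x).const_mul p).const_add (1 - p)
  have hgderiv : ∀ x, HasDerivAt g (g' x) x := by
    intro x
    have hlog : HasDerivAt (fun y => log (D y)) (p * exp x / D x) x :=
      (hDderiv x).log (hDpos x).ne'
    have h1 : HasDerivAt (fun y : ℝ => p * y + y ^ 2 / 8) (p + x * 2 / 8) x := by
      have := ((hasDerivAt_id x).const_mul p).add
        (((hasDerivAt_pow 2 x)).div_const 8)
      simpa [mul_comm, Pi.add_def] using this
    have := h1.sub hlog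
    refine this.congr_deriv ?_
    simp only [hg']; ring
  have hg'deriv : ∀ x, HasDerivAt g' (1 / 4 - p * exp x * (1 - p) / (D x) ^ 2) x := by
    intro x
    have hu : HasDerivAt (fun y => p * exp y / D y)
        ((p * exp x * D x - p * exp x * (p * exp x)) / (D x) ^ 2) x :=
      ((Real.hasDerivAt_exp x).const_mul p).div (hDderiv x) (hDpos x).ne'
    have h1 : HasDerivAt (fun y : ℝ => p + y / 4) (1 / 4) x := by
      simpa using ((hasDerivAt_id x).div_const 4).const_add p
    have := h1.sub hu
    refine this.congr_deriv ?_
    have : p * exp x * D x - p * exp x * (p * exp x) = p * exp x * (1 - p) := by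
      simp only [hD]; ring
    rw [this]
  have hg''nonneg : ∀ x, 0 ≤ 1 / 4 - p * exp x * (1 - p) / (D x) ^ 2 := by
    intro x
    have hD2 : 0 < (D x) ^ 2 := pow_pos (hDpos x) 2
    rw [sub_nonneg, div_le_iff₀ hD2]
    have : ((1 - p) - p * exp x) ^ 2 ≥ 0 := sq_nonneg _
    have hDx : D x = (1 - p) + p * exp x := rfl
    nlinarith [sq_nonneg ((1 - p) - p * exp x)]
  have hg'mono : Monotone g' := by
    apply monotone_of_deriv_nonneg
    · exact fun x => (hg'deriv x).differentiableAt
    · intro x; rw [(hg'deriv x).deriv]; exact hg''nonneg x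
  have hg'zero : g' 0 = 0 := by
    simp only [hg', hD]
    rw [Real.exp_zero]
    field_simp
    ring
  have hgzero : g 0 = 0 := by
    simp only [hg, hD]
    rw [Real.exp_zero]
    norm_num
  have key : ∀ x, 0 ≤ g x := by
    intro x
    rcases le_or_gt 0 x with hx | hx
    · have : MonotoneOn g (Set.Ici 0) := by
        apply monotoneOn_of_deriv_nonneg (convex_Ici 0)
        · exact Continuous.continuousOn (by
            have : Differentiable ℝ g := fun y => (hgderiv y).differentiableAt
            exact this.continuous)
        · intro y hy
          exact ((hgderiv y).differentiableAt).differentiableWithinAt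
        · intro y hy
          rw [(hgderiv y).deriv]
          have : (0:ℝ) ≤ y := by
            simp only [interior_Ici, Set.mem_Ioi] at hy; exact hy.le
          calc (0:ℝ) = g' 0 := hg'zero.symm
            _ ≤ g' y := hg'mono this
      have := this (Set.self_mem_Ici) (Set.mem_Ici.2 hx) hx
      rwa [hgzero] at this
    · have : AntitoneOn g (Set.Iic 0) := by
        apply antitoneOn_of_deriv_nonpos (convex_Iic 0)
        · exact Continuous.continuousOn (by
            have : Differentiable ℝ g := fun y => (hgderiv y).differentiableAt
            exact this.continuous)
        · intro y hy
          exact ((hgderiv y).differentiableAt).differentiableWithinAt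
        · intro y hy
          rw [(hgderiv y).deriv]
          have hy0 : y ≤ (0:ℝ) := by
            simp only [interior_Iic, Set.mem_Iio] at hy; exact hy.le
          calc g' y ≤ g' 0 := hg'mono hy0
            _ = 0 := hg'zero
      have := this (Set.mem_Iic.2 hx.le) (Set.self_mem_Iic) hx.le
      rwa [hgzero] at this
  have := key h
  simp only [hg, sub_nonneg] at this
  have hlogle : log (D h) ≤ p * h + h ^ 2 / 8 := this
  calc (1 - p) + p * exp h = D h := rfl
    _ ≤ exp (p * h + h ^ 2 / 8) := by
      rw [← Real.exp_log (hDpos h)]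
      exact Real.exp_le_exp.2 hlogle

end Aux

section Aux2
open Real MeasureTheory ProbabilityTheory Finset

lemma mgf_single_bound {Ω : Type*} [MeasurableSpace Ω] (P : Measure Ω) [IsProbabilityMeasure P]
    (X : Ω → ℝ) (r : ℝ) (hmeas : Measurable X) (hval : ∀ ω, X ω ∈ Set.Icc (0:ℝ) 1)
    (hmean : ∫ ω, X ω ∂P = r) (l : ℝ) :
    ∫ ω, exp (l * (r - X ω)) ∂P ≤ exp (l ^ 2 / 8) := by
  have hr0 : 0 ≤ r := hmean ▸ integral_nonneg (fun ω => (hval ω).1)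
  have hXint : Integrable X P := by
    refine Integrable.mono' (integrable_const 1) hmeas.aestronglyMeasurable ?_
    exact Filter.Eventually.of_forall fun ω => by
      rw [Real.norm_eq_abs, abs_le]; exact ⟨by linarith [(hval ω).1], (hval ω).2⟩
  have hr1 : r ≤ 1 := by
    rw [← hmean]
    calc ∫ ω, X ω ∂P ≤ ∫ _, (1:ℝ) ∂P := integral_mono hXint (integrable_const 1)
          (fun ω => (hval ω).2)
      _ = 1 := by simp
  have hpt : ∀ ω, exp (l * (r - X ω)) ≤
      (1 - X ω) * exp (l * r) + X ω * exp (l * (r - 1)) := by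
    intro ω
    have hx0 := (hval ω).1; have hx1 := (hval ω).2
    have := convexOn_exp.2 (Set.mem_univ (l * r)) (Set.mem_univ (l * (r - 1)))
      (by linarith : (0:ℝ) ≤ 1 - X ω) hx0 (by ring)
    simpa [smul_eq_mul, show (1 - X ω) * (l * r) + X ω * (l * (r - 1)) = l * (r - X ω) by ring]
      using this
  have hint1 : Integrable (fun ω => exp (l * (r - X ω))) P := by
    refine Integrable.mono' (integrable_const (exp |l|))
      ((hmeas.const_sub r).const_mul l).exp.aestronglyMeasurable ?_
    refine Filter.Eventually.of_forall fun ω => ?_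
    rw [Real.norm_eq_abs, abs_of_pos (exp_pos _)]
    apply Real.exp_le_exp.2
    have hx0 := (hval ω).1; have hx1 := (hval ω).2
    calc l * (r - X ω) ≤ |l * (r - X ω)| := le_abs_self _
      _ = |l| * |r - X ω| := abs_mul _ _
      _ ≤ |l| * 1 := by
          apply mul_le_mul_of_nonneg_left _ (abs_nonneg l)
          rw [abs_le]; constructor <;> linarith
      _ = |l| := mul_one _
  have hint2 : Integrable (fun ω => (1 - X ω) * exp (l * r) + X ω * exp (l * (r - 1))) P :=
    (((integrable_const 1).sub hXint).mul_const _).add (hXint.mul_const _)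
  have hIle : ∫ ω, exp (l * (r - X ω)) ∂P ≤
      ∫ ω, ((1 - X ω) * exp (l * r) + X ω * exp (l * (r - 1))) ∂P :=
    integral_mono hint1 hint2 hpt
  have hIeq : ∫ ω, ((1 - X ω) * exp (l * r) + X ω * exp (l * (r - 1))) ∂P
      = (1 - r) * exp (l * r) + r * exp (l * (r - 1)) := by
    have hfe : (fun ω => (1 - X ω) * exp (l * r) + X ω * exp (l * (r - 1))) =
        fun ω => exp (l * r) + X ω * (exp (l * (r - 1)) - exp (l * r)) := by
      funext ω; ring
    rw [hfe, integral_add (integrable_const _) (hXint.mul_const _), integral_mul_const,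
      hmean, integral_const]
    simp; ring
  have core : r + (1 - r) * exp l ≤ exp ((1 - r) * l + l ^ 2 / 8) := by
    have := hoeffding_core (1 - r) (by linarith) (by linarith) l
    have h2 : (1 - (1 - r)) = r := by ring
    linarith [this]
  calc ∫ ω, exp (l * (r - X ω)) ∂P
      ≤ (1 - r) * exp (l * r) + r * exp (l * (r - 1)) := hIle.trans_eq hIeq
    _ = exp (l * (r - 1)) * (r + (1 - r) * exp l) := by
        have e1 : exp (l * r) = exp (l * (r - 1)) * exp l := by
          rw [← Real.exp_add]; congr 1; ring
        rw [e1]; ring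
    _ ≤ exp (l * (r - 1)) * exp ((1 - r) * l + l ^ 2 / 8) :=
        mul_le_mul_of_nonneg_left core (exp_pos _).le
    _ = exp (l ^ 2 / 8) := by rw [← Real.exp_add]; congr 1; ring

lemma chernoff_bound {Ω : Type*} [MeasurableSpace Ω] (P : Measure Ω) [IsProbabilityMeasure P]
    (X : ℕ → Ω → ℝ) (r : ℝ)
    (hmeas : ∀ s, Measurable (X (s + 1)))
    (hindep : iIndepFun (fun s : ℕ => X (s + 1)) P)
    (hval : ∀ s ω, X (s + 1) ω ∈ Set.Icc (0:ℝ) 1)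
    (hmean : ∀ s, ∫ ω, X (s + 1) ω ∂P = r)
    (s : ℕ) (ε : ℝ) (hε : 0 ≤ ε) :
    (P {ω | (s : ℝ) * ε ≤ ∑ j ∈ Finset.range s, (r - X (j + 1) ω)}).toReal ≤
      exp (-2 * s * ε ^ 2) := by
  have hYmeas : ∀ j : ℕ, Measurable (fun ω => r - X (j + 1) ω) :=
    fun j => (hmeas j).const_sub r
  have hYindep : iIndepFun (fun j : ℕ => fun ω => r - X (j + 1) ω) P :=
    hindep.comp (fun _ => fun x : ℝ => r - x) (fun _ => measurable_const.sub measurable_id)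
  have hr0 : 0 ≤ r := (hmean 0) ▸ integral_nonneg (fun ω => (hval 0 ω).1)
  have hXint : Integrable (X 1) P := by
    refine Integrable.mono' (integrable_const 1) (hmeas 0).aestronglyMeasurable ?_
    exact Filter.Eventually.of_forall fun ω => by
      rw [Real.norm_eq_abs, abs_le]; exact ⟨by linarith [(hval 0 ω).1], (hval 0 ω).2⟩
  have hr1 : r ≤ 1 := by
    rw [← hmean 0]
    calc ∫ ω, X 1 ω ∂P ≤ ∫ _, (1:ℝ) ∂P := integral_mono hXint (integrable_const 1)
          (fun ω => (hval 0 ω).2)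
      _ = 1 := by simp
  have hYbdd : ∀ (j : ℕ) ω, |r - X (j + 1) ω| ≤ 1 := by
    intro j ω
    have h0 := (hval j ω).1; have h1 := (hval j ω).2
    rw [abs_le]; constructor <;> linarith
  -- the sum as a plain function
  set Sf : Ω → ℝ := fun ω => ∑ j ∈ Finset.range s, (r - X (j + 1) ω) with hSfdef
  have hSfmeas : Measurable Sf :=
    Finset.measurable_sum (Finset.range s) (fun j _ => hYmeas j)
  have hSf : Sf = ∑ j ∈ Finset.range s, (fun ω => r - X (j + 1) ω) := by
    funext ω; rw [Finset.sum_apply]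
  have hSfbdd : ∀ ω, Sf ω ≤ s := by
    intro ω
    calc Sf ω ≤ ∑ j ∈ Finset.range s, (1:ℝ) :=
          Finset.sum_le_sum fun j _ => (abs_le.1 (hYbdd j ω)).2
      _ = s := by simp
  have hsumint : Integrable (fun ω => exp ((4 * ε) * Sf ω)) P := by
    refine Integrable.mono' (integrable_const (exp (4 * ε * s)))
      (hSfmeas.const_mul (4 * ε)).exp.aestronglyMeasurable ?_
    refine Filter.Eventually.of_forall fun ω => ?_
    rw [Real.norm_eq_abs, abs_of_pos (exp_pos _)]
    apply Real.exp_le_exp.2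
    have := hSfbdd ω
    nlinarith
  have hch := measure_ge_le_exp_mul_mgf (μ := P) (X := Sf)
    ((s : ℝ) * ε) (by positivity : (0:ℝ) ≤ 4 * ε) hsumint
  have hZint : ∀ j : ℕ, Integrable (fun ω => exp ((4 * ε) * (r - X (j + 1) ω))) P := by
    intro j
    refine Integrable.mono' (integrable_const (exp (4 * ε)))
      ((hYmeas j).const_mul (4 * ε)).exp.aestronglyMeasurable ?_
    refine Filter.Eventually.of_forall fun ω => ?_
    rw [Real.norm_eq_abs, abs_of_pos (exp_pos _)]
    apply Real.exp_le_exp.2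
    have h1 := (abs_le.1 (hYbdd j ω)).2
    nlinarith
  have hmgf : mgf Sf P (4 * ε) ≤ exp (2 * s * ε ^ 2) := by
    rw [hSf, hYindep.mgf_sum hYmeas (Finset.range s)]
    calc ∏ j ∈ Finset.range s, mgf (fun ω => r - X (j + 1) ω) P (4 * ε)
        ≤ ∏ j ∈ Finset.range s, exp ((4 * ε) ^ 2 / 8) := by
          refine Finset.prod_le_prod (fun j _ => mgf_nonneg) (fun j _ => ?_)
          exact mgf_single_bound P (X (j+1)) r (hmeas j) (hval j) (hmean j) (4 * ε)
      _ = exp (2 * s * ε ^ 2) := by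
          rw [Finset.prod_const, Finset.card_range, ← Real.exp_nat_mul]
          congr 1; push_cast; ring
  calc (P {ω | (s : ℝ) * ε ≤ Sf ω}).toReal
      ≤ exp (-(4 * ε) * ((s:ℝ) * ε)) * mgf Sf P (4 * ε) := hch
    _ ≤ exp (-(4 * ε) * ((s:ℝ) * ε)) * exp (2 * s * ε ^ 2) :=
        mul_le_mul_of_nonneg_left hmgf (exp_pos _).le
    _ = exp (-2 * s * ε ^ 2) := by rw [← Real.exp_add]; congr 1; ring

end Aux2

/-- anti-concentration for CL-SG. Let `m ≥ 1`, `t ≥ 4` with `t² ≥ m`, `γ > 0`,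
and let `A*` be a finite set of arms of cardinality at most `m`. Each arm `a` has an i.i.d.
`[0,1]`-valued reward sequence with mean `r a`, an arbitrary random count `n a ∈ {0,…,t−1}` and
empirical mean `r̂ a` of the first `n a` samples.  Let `w` be a standard Gaussian independent of
all rewards and counts and set `r̄ a = r̂ a + w·√(γ ln t/(n a + 1))`.  Then
`Pr(∑_{a∈A*} r̄ a ≥ ∑_{a∈A*} r a) ≥ (1/2)·Φ(−√(4/γ))`. -/
theorem stmt3 {Ω : Type*} [MeasurableSpace Ω] (P : Measure Ω) [IsProbabilityMeasure P]
    {ι : Type*}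
    (m t : ℕ) (hm : 1 ≤ m) (ht : 4 ≤ t) (htm : m ≤ t ^ 2) (γ : ℝ) (hγ : 0 < γ)
    (Astar : Finset ι) (hcard : Astar.card ≤ m)
    (X : ι → ℕ → Ω → ℝ) (r : ι → ℝ)
    (hXmeas : ∀ a ∈ Astar, ∀ s, Measurable (X a (s + 1)))
    (hXindep : ∀ a ∈ Astar, iIndepFun (fun s : ℕ => X a (s + 1)) P)
    (hXident : ∀ a ∈ Astar, ∀ s : ℕ, IdentDistrib (X a (s + 1)) (X a 1) P P)
    (hXval : ∀ a ∈ Astar, ∀ s : ℕ, ∀ ω, X a (s + 1) ω ∈ Set.Icc (0 : ℝ) 1)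
    (hXmean : ∀ a ∈ Astar, ∀ s : ℕ, ∫ ω, X a (s + 1) ω ∂P = r a)
    (n : ι → Ω → ℕ)
    (hnmeas : ∀ a ∈ Astar, Measurable (n a))
    (hnle : ∀ a ∈ Astar, ∀ ω, n a ω ≤ t - 1)
    -- empirical mean of the first `n a` samples (equal to `0` when `n a = 0`).
    (rhat : ι → Ω → ℝ)
    (hrhat : ∀ a ω, rhat a ω = (∑ j ∈ Finset.Icc 1 (n a ω), X a j ω) / (n a ω : ℝ))
    -- the single shared Gaussian seed, independent of rewards and counts
    (w : Ω → ℝ)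
    (hwmeas : Measurable w)
    (hwlaw : Measure.map w P = ProbabilityTheory.gaussianReal 0 1)
    (hwindep : IndepFun w
      (fun ω => ((fun (a : {x // x ∈ Astar}) (s : ℕ) => X a.1 s ω),
        (fun a : {x // x ∈ Astar} => n a.1 ω))) P)
    -- the perturbed estimates
    (rbar : ι → Ω → ℝ)
    (hrbar : ∀ a ω, rbar a ω =
      rhat a ω + w ω * Real.sqrt (γ * Real.log t / ((n a ω : ℝ) + 1))) :
    (1 / 2) * stdGaussianCdf (-Real.sqrt (4 / γ))
      ≤ (P {ω | ∑ a ∈ Astar, r a ≤ ∑ a ∈ Astar, rbar a ω}).toReal := by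
  classical
  set T : ℝ := (t : ℝ) with hT
  have hT4 : (4 : ℝ) ≤ T := by rw [hT]; exact_mod_cast ht
  have hTpos : 0 < T := by linarith
  set L : ℝ := Real.log T with hL
  have hL1 : 1 ≤ L := by
    rw [hL, Real.le_log_iff_exp_le hTpos]
    calc Real.exp 1 ≤ 2.7182818286 := Real.exp_one_lt_d9.le
      _ ≤ T := by linarith
  have hLpos : 0 < L := lt_of_lt_of_le one_pos hL1
  set c : ℝ := Real.sqrt (4 / γ) with hc
  have hc0 : 0 ≤ c := Real.sqrt_nonneg _
  -- threshold per sample count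
  set eps : ℕ → ℝ := fun s => 2 * Real.sqrt (L / (s + 1)) with heps
  have heps0 : ∀ s, 0 ≤ eps s := fun s => by positivity
  -- key algebraic fact: c * sqrt(γ L/(k+1)) = eps k
  have hkey : ∀ k : ℕ, c * Real.sqrt (γ * L / ((k : ℝ) + 1)) = eps k := by
    intro k
    have hk1 : (0:ℝ) < (k : ℝ) + 1 := by positivity
    rw [hc, heps, ← Real.sqrt_mul (by positivity : (0:ℝ) ≤ 4 / γ)]
    have h1 : 4 / γ * (γ * L / ((k:ℝ) + 1)) = 2 ^ 2 * (L / ((k:ℝ) + 1)) := by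
      field_simp; ring
    rw [h1, Real.sqrt_mul (by positivity : (0:ℝ) ≤ (2:ℝ)^2), Real.sqrt_sq (by norm_num : (0:ℝ) ≤ 2)]
  -- the bad events
  set Bad : ι → ℕ → Set Ω := fun a s =>
    {ω | (s : ℝ) * eps s ≤ ∑ j ∈ Finset.range s, (r a - X a (j + 1) ω)} with hBad
  -- the good set in the product space
  set S : Set (({x // x ∈ Astar} → ℕ → ℝ) × ({x // x ∈ Astar} → ℕ)) :=
    {q | ∀ a : {x // x ∈ Astar}, ∀ s ∈ Finset.Icc 1 (t - 1),
      ∑ j ∈ Finset.range s, (r a.1 - q.1 a (j + 1)) < (s : ℝ) * eps s} with hS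
  have hSmeas : MeasurableSet S := by
    have : S = ⋂ (a : {x // x ∈ Astar}), ⋂ (s : ℕ), ⋂ (_ : s ∈ Finset.Icc 1 (t - 1)),
        {q : ({x // x ∈ Astar} → ℕ → ℝ) × ({x // x ∈ Astar} → ℕ) |
          ∑ j ∈ Finset.range s, (r a.1 - q.1 a (j + 1)) < (s : ℝ) * eps s} := by
      ext q; simp only [hS, Set.mem_setOf_eq, Set.mem_iInter]; try tauto
    rw [this]
    refine MeasurableSet.iInter fun a => MeasurableSet.iInter fun s =>
      MeasurableSet.iInter fun _ => ?_
    have hf : Measurable (fun q : ({x // x ∈ Astar} → ℕ → ℝ) × ({x // x ∈ Astar} → ℕ) =>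
        ∑ j ∈ Finset.range s, (r a.1 - q.1 a (j + 1))) := by
      refine Finset.measurable_sum _ fun j _ => ?_
      have h1 : Measurable fun q : ({x // x ∈ Astar} → ℕ → ℝ) × ({x // x ∈ Astar} → ℕ) =>
          q.1 a := measurable_fst.eval
      exact Measurable.const_sub (h1.eval) _
    exact measurableSet_lt hf measurable_const
  set φ : Ω → ({x // x ∈ Astar} → ℕ → ℝ) × ({x // x ∈ Astar} → ℕ) :=
    fun ω => ((fun (a : {x // x ∈ Astar}) (s : ℕ) => X a.1 s ω),
      (fun a : {x // x ∈ Astar} => n a.1 ω)) with hφ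
  -- the good event in Ω
  have hpre : φ ⁻¹' S = ⋂ (a : {x // x ∈ Astar}), ⋂ (s : ℕ), ⋂ (_ : s ∈ Finset.Icc 1 (t - 1)),
      {ω : Ω | ∑ j ∈ Finset.range s, (r a.1 - X a.1 (j + 1) ω) < (s : ℝ) * eps s} := by
    ext ω; simp only [hφ, hS, Set.mem_preimage, Set.mem_setOf_eq, Set.mem_iInter]; try tauto
  have hpreMeas : MeasurableSet (φ ⁻¹' S) := by
    rw [hpre]
    refine MeasurableSet.iInter fun a => MeasurableSet.iInter fun s =>
      MeasurableSet.iInter fun _ => ?_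
    exact measurableSet_lt (Finset.measurable_sum _ fun j _ =>
      (hXmeas a.1 a.2 j).const_sub _) measurable_const
  -- complement is covered by bad events
  have hcompl : (φ ⁻¹' S)ᶜ ⊆ ⋃ a ∈ Astar, ⋃ s ∈ Finset.Icc 1 (t - 1), Bad a s := by
    intro ω hω
    rw [hpre] at hω
    simp only [Set.compl_iInter, Set.mem_iUnion, Set.mem_compl_iff, Set.mem_setOf_eq] at hω
    obtain ⟨a, s, hs, hlt⟩ := hω
    refine Set.mem_iUnion₂.2 ⟨a.1, a.2, Set.mem_iUnion₂.2 ⟨s, hs, ?_⟩⟩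
    simp only [hBad, Set.mem_setOf_eq]
    linarith [not_lt.1 hlt]
  -- basic bounds on the means
  have hr01 : ∀ a ∈ Astar, 0 ≤ r a ∧ r a ≤ 1 := by
    intro a ha
    have hmean := hXmean a ha 0
    have h0 : 0 ≤ r a := hmean ▸ integral_nonneg (fun ω => (hXval a ha 0 ω).1)
    have hXint : Integrable (X a 1) P := by
      refine Integrable.mono' (integrable_const 1) (hXmeas a ha 0).aestronglyMeasurable ?_
      exact Filter.Eventually.of_forall fun ω => by
        rw [Real.norm_eq_abs, abs_le]
        exact ⟨by linarith [(hXval a ha 0 ω).1], (hXval a ha 0 ω).2⟩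
    have h1 : r a ≤ 1 := by
      rw [← hmean]
      calc ∫ ω, X a (0 + 1) ω ∂P ≤ ∫ _, (1:ℝ) ∂P :=
            integral_mono hXint (integrable_const 1) (fun ω => (hXval a ha 0 ω).2)
        _ = 1 := by simp
    exact ⟨h0, h1⟩
  -- per-event Chernoff bound
  have hBadBound : ∀ a ∈ Astar, ∀ s ∈ Finset.Icc 1 (t - 1),
      (P (Bad a s)).toReal ≤ (T ^ 4)⁻¹ := by
    intro a ha s hs
    have hs1 : (1:ℝ) ≤ (s : ℝ) := by exact_mod_cast (Finset.mem_Icc.1 hs).1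
    have hch := chernoff_bound P (X a) (r a) (hXmeas a ha) (hXindep a ha)
      (fun s ω => hXval a ha s ω) (hXmean a ha) s (eps s) (heps0 s)
    refine hch.trans ?_
    have hsq : eps s ^ 2 = 4 * (L / ((s:ℝ) + 1)) := by
      rw [heps]
      rw [mul_pow, Real.sq_sqrt (by positivity : (0:ℝ) ≤ L / ((s:ℝ)+1))]
      norm_num
    have hexp : -2 * (s:ℝ) * eps s ^ 2 ≤ -(4 * L) := by
      rw [hsq]
      have hD : (0:ℝ) < (s:ℝ) + 1 := by linarith
      rw [show -2 * (s:ℝ) * (4 * (L / ((s:ℝ) + 1))) = -((8 * (s:ℝ) * L) / ((s:ℝ) + 1)) by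
        ring]
      rw [neg_le_neg_iff, le_div_iff₀ hD]
      nlinarith
    calc Real.exp (-2 * (s:ℝ) * eps s ^ 2) ≤ Real.exp (-(4 * L)) := Real.exp_le_exp.2 hexp
      _ = (T ^ 4)⁻¹ := by
          rw [Real.exp_neg]
          congr 1
          rw [show (4:ℝ) * L = ((4:ℕ):ℝ) * L by norm_num, Real.exp_nat_mul, hL,
            Real.exp_log hTpos]
  -- bound the probability of the complement of the good set
  have hBadMeas : ∀ a ∈ Astar, ∀ s : ℕ, s ∈ Finset.Icc 1 (t-1) → MeasurableSet (Bad a s) := by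
    intro a ha s _
    exact measurableSet_le measurable_const
      (Finset.measurable_sum _ fun j _ => (hXmeas a ha j).const_sub _)
  have hcomplBound : (P ((φ ⁻¹' S)ᶜ)).toReal ≤ 1 / 4 := by
    have h1 : P ((φ ⁻¹' S)ᶜ) ≤ ∑ a ∈ Astar, ∑ s ∈ Finset.Icc 1 (t - 1), P (Bad a s) :=
      (measure_mono hcompl).trans ((measure_biUnion_finset_le _ _).trans
        (Finset.sum_le_sum fun a _ => measure_biUnion_finset_le _ _))
    have h2 : ∑ a ∈ Astar, ∑ s ∈ Finset.Icc 1 (t - 1), P (Bad a s) ≤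
        ∑ a ∈ Astar, ∑ s ∈ Finset.Icc 1 (t - 1), ENNReal.ofReal ((T ^ 4)⁻¹) := by
      refine Finset.sum_le_sum fun a ha => Finset.sum_le_sum fun s hs => ?_
      rw [← ENNReal.ofReal_toReal (measure_ne_top P (Bad a s))]
      exact ENNReal.ofReal_le_ofReal (hBadBound a ha s hs)
    have h3 : ∑ a ∈ Astar, ∑ s ∈ Finset.Icc 1 (t - 1), ENNReal.ofReal ((T ^ 4)⁻¹)
        = ENNReal.ofReal ((Astar.card * (t - 1) : ℕ) * (T ^ 4)⁻¹) := by
      rw [Finset.sum_const, Finset.sum_const, Nat.card_Icc, smul_smul, nsmul_eq_mul,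
        ← ENNReal.ofReal_natCast, ← ENNReal.ofReal_mul (by positivity)]
      congr 3
    have h4 : ((Astar.card * (t - 1) : ℕ) : ℝ) * (T ^ 4)⁻¹ ≤ 1 / 4 := by
      have hcardle : ((Astar.card * (t - 1) : ℕ) : ℝ) ≤ T ^ 2 * T := by
        push_cast
        have h5 : (Astar.card : ℝ) ≤ T ^ 2 := by
          have : (Astar.card : ℝ) ≤ (m : ℝ) := by exact_mod_cast hcard
          refine this.trans ?_
          rw [hT]; exact_mod_cast htm
        have h6 : ((t - 1 : ℕ) : ℝ) ≤ T := by
          rw [hT]; exact_mod_cast Nat.sub_le t 1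
        have h7 : (0:ℝ) ≤ ((t - 1 : ℕ) : ℝ) := Nat.cast_nonneg _
        nlinarith [Nat.cast_nonneg (α := ℝ) Astar.card]
      have hT4pos : (0:ℝ) < T ^ 4 := by positivity
      calc ((Astar.card * (t - 1) : ℕ) : ℝ) * (T ^ 4)⁻¹ ≤ (T ^ 2 * T) * (T ^ 4)⁻¹ := by
            apply mul_le_mul_of_nonneg_right hcardle (by positivity)
        _ = T⁻¹ := by field_simp
        _ ≤ 1 / 4 := by
            have := inv_anti₀ (by norm_num : (0:ℝ) < 4) hT4
            simpa using this
    have h5 : P ((φ ⁻¹' S)ᶜ) ≤ ENNReal.ofReal (1 / 4) :=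
      h1.trans (h2.trans (h3.le.trans (ENNReal.ofReal_le_ofReal h4)))
    calc (P ((φ ⁻¹' S)ᶜ)).toReal ≤ (ENNReal.ofReal (1/4)).toReal :=
          ENNReal.toReal_mono ENNReal.ofReal_ne_top h5
      _ = 1 / 4 := ENNReal.toReal_ofReal (by norm_num)
  have hSP : (3:ℝ)/4 ≤ (P (φ ⁻¹' S)).toReal := by
    have hadd := measure_add_measure_compl hpreMeas (μ := P)
    rw [measure_univ] at hadd
    have := congrArg ENNReal.toReal hadd
    rw [ENNReal.toReal_add (measure_ne_top P _) (measure_ne_top P _), ENNReal.toReal_one] at this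
    linarith
  -- Gaussian tail probability
  have hwP : (P (w ⁻¹' Set.Ici c)).toReal = stdGaussianCdf (-c) := by
    have h1 : P (w ⁻¹' Set.Ici c) = (Measure.map w P) (Set.Ici c) :=
      (Measure.map_apply hwmeas measurableSet_Ici).symm
    have hmapneg : (gaussianReal 0 1).map (fun x : ℝ => (-1 : ℝ) * x) = gaussianReal 0 1 := by
      rw [gaussianReal_map_const_mul]
      norm_num
    have h2 : gaussianReal 0 1 (Set.Iic (-c)) = gaussianReal 0 1 (Set.Ici c) := by
      conv_lhs => rw [← hmapneg]
      rw [Measure.map_apply (measurable_const_mul _) measurableSet_Iic]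
      congr 1
      ext x
      simp only [Set.mem_preimage, Set.mem_Iic, Set.mem_Ici]
      constructor <;> intro h <;> linarith
    rw [h1, hwlaw, stdGaussianCdf, h2]
  -- independence: split the intersection
  have hinter : P (w ⁻¹' Set.Ici c ∩ φ ⁻¹' S) = P (w ⁻¹' Set.Ici c) * P (φ ⁻¹' S) :=
    (indepFun_iff_measure_inter_preimage_eq_mul.1 hwindep) (Set.Ici c) S
      measurableSet_Ici hSmeas
  -- inclusion into the target event
  have hincl : w ⁻¹' Set.Ici c ∩ φ ⁻¹' S ⊆
      {ω | ∑ a ∈ Astar, r a ≤ ∑ a ∈ Astar, rbar a ω} := by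
    rintro ω ⟨hwω, hSω⟩
    have hwc : c ≤ w ω := hwω
    have hw0 : 0 ≤ w ω := hc0.trans hwc
    simp only [hφ, hS, Set.mem_preimage, Set.mem_setOf_eq] at hSω
    rw [Set.mem_setOf_eq]
    refine Finset.sum_le_sum fun a ha => ?_
    rw [hrbar]
    have hwclow : ∀ k : ℕ, eps k ≤ w ω * Real.sqrt (γ * L / ((k:ℝ) + 1)) := by
      intro k
      calc eps k = c * Real.sqrt (γ * L / ((k:ℝ) + 1)) := (hkey k).symm
        _ ≤ w ω * Real.sqrt (γ * L / ((k:ℝ) + 1)) :=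
            mul_le_mul_of_nonneg_right hwc (Real.sqrt_nonneg _)
    rcases Nat.eq_zero_or_pos (n a ω) with hk | hk
    · -- no samples: the Gaussian term alone dominates
      rw [hrhat, hk]
      have hempty : Finset.Icc 1 0 = (∅ : Finset ℕ) := Finset.Icc_eq_empty (by omega)
      rw [hempty]
      simp only [Finset.sum_empty, Nat.cast_zero, zero_div, zero_add]
      have h2 : eps 0 = 2 * Real.sqrt L := by rw [heps]; norm_num
      have h3 : (1:ℝ) ≤ Real.sqrt L := by
        rw [show (1:ℝ) = Real.sqrt 1 by rw [Real.sqrt_one]]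
        exact Real.sqrt_le_sqrt hL1
      have h4 := hwclow 0
      rw [h2] at h4
      have h5 := (hr01 a ha).2
      norm_num at h4 ⊢
      nlinarith [Real.sqrt_nonneg L]
    · -- at least one sample: use the concentration event
      set k := n a ω with hkdef
      have hks : k ∈ Finset.Icc 1 (t - 1) := Finset.mem_Icc.2 ⟨hk, hnle a ha ω⟩
      have hlt := hSω ⟨a, ha⟩ k hks
      have hkpos : (0:ℝ) < (k:ℝ) := by exact_mod_cast hk
      -- rewrite the sum
      have hsum : ∑ j ∈ Finset.Icc 1 k, X a j ω = ∑ j ∈ Finset.range k, X a (j + 1) ω := by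
        rw [← Finset.Ico_add_one_right_eq_Icc, Finset.sum_Ico_eq_sum_range]
        try simp only [Nat.add_sub_cancel]
        exact Finset.sum_congr rfl fun j _ => by rw [Nat.add_comm]
      have hexpand : ∑ j ∈ Finset.range k, (r a - X a (j + 1) ω)
          = (k:ℝ) * r a - ∑ j ∈ Finset.range k, X a (j + 1) ω := by
        rw [Finset.sum_sub_distrib, Finset.sum_const, Finset.card_range, nsmul_eq_mul]
      rw [hexpand] at hlt
      set Sx : ℝ := ∑ j ∈ Finset.range k, X a (j + 1) ω with hSx
      -- conclude
      rw [hrhat, ← hkdef, hsum]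
      have h6 : 0 < Sx / (k:ℝ) + eps k - r a := by
        have h7 : Sx / (k:ℝ) + eps k - r a = (Sx + (k:ℝ) * eps k - (k:ℝ) * r a) / (k:ℝ) := by
          field_simp
        rw [h7]
        apply div_pos _ hkpos
        linarith
      have h8 := hwclow k
      linarith
  -- final assembly
  have hfinal : P (w ⁻¹' Set.Ici c) * P (φ ⁻¹' S) ≤
      P {ω | ∑ a ∈ Astar, r a ≤ ∑ a ∈ Astar, rbar a ω} :=
    hinter.symm.le.trans (measure_mono hincl)
  have htoReal : (P (w ⁻¹' Set.Ici c) * P (φ ⁻¹' S)).toReal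
      = (P (w ⁻¹' Set.Ici c)).toReal * (P (φ ⁻¹' S)).toReal := ENNReal.toReal_mul
  calc (1 / 2) * stdGaussianCdf (-Real.sqrt (4 / γ))
      = (1 / 2) * (P (w ⁻¹' Set.Ici c)).toReal := by rw [hwP]
    _ ≤ (P (φ ⁻¹' S)).toReal * (P (w ⁻¹' Set.Ici c)).toReal := by
        apply mul_le_mul_of_nonneg_right _ ENNReal.toReal_nonneg
        linarith
    _ = (P (w ⁻¹' Set.Ici c) * P (φ ⁻¹' S)).toReal := by rw [htoReal]; ring
    _ ≤ (P {ω | ∑ a ∈ Astar, r a ≤ ∑ a ∈ Astar, rbar a ω}).toReal :=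
        ENNReal.toReal_mono (measure_ne_top P _) hfinal
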